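/- arXiv:1903.05410 — 5 statements merged into one kernel-verified Lean document; each statement's English description precedes it below -/
import Mathlib

section
/- For a positive integer k, the number 6k-1 is composite with all prime factors greater than 3 if and only if k can be written as k = (6x-1)y + x for some positive integers x, y. -/
theorem stmt_5 (k : ℕ) (hk : 0 < k) :
    (∃ a b : ℕ, 1 < a ∧ 1 < b ∧ ¬ 2 ∣ a ∧ ¬ 3 ∣ a ∧ ¬ 2 ∣ b ∧ ¬ 3 ∣ b ∧
      6 * k - 1 = a * b) ↔
    (∃ x y : ℕ, 0 < x ∧ 0 < y ∧ k = (6 * x - 1) * y + x) := by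
  constructor
  · rintro ⟨a, b, ha1, hb1, ha2, ha3, hb2, hb3, hab⟩
    have ha6 : a % 6 = 1 ∨ a % 6 = 5 := by omega
    have hb6 : b % 6 = 1 ∨ b % 6 = 5 := by omega
    obtain ⟨p, hp⟩ : ∃ p, a = 6 * p + a % 6 := ⟨a / 6, by omega⟩
    obtain ⟨q, hq⟩ : ∃ q, b = 6 * q + b % 6 := ⟨b / 6, by omega⟩
    rcases ha6 with h1 | h1 <;> rcases hb6 with h2 | h2 <;>
        rw [h1] at hp <;> rw [h2] at hq
    · exfalso
      obtain ⟨t, ht⟩ : ∃ t, a * b = 36 * t + 6 * p + 6 * q + 1 :=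
        ⟨p * q, by rw [hp, hq]; ring⟩
      omega
    · obtain ⟨t, ht1, ht2⟩ : ∃ t, a * b = 36 * t + 30 * p + 6 * q + 5 ∧
          (6 * (q + 1) - 1) * p + (q + 1) = 6 * t + 5 * p + q + 1 :=
        ⟨p * q, by rw [hp, hq]; ring, by rw [show 6*(q+1)-1 = 6*q+5 by omega]; ring⟩
      exact ⟨q + 1, p, by omega, by omega, by omega⟩
    · obtain ⟨t, ht1, ht2⟩ : ∃ t, a * b = 36 * t + 6 * p + 30 * q + 5 ∧
          (6 * (p + 1) - 1) * q + (p + 1) = 6 * t + 5 * q + p + 1 :=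
        ⟨p * q, by rw [hp, hq]; ring, by rw [show 6*(p+1)-1 = 6*p+5 by omega]; ring⟩
      exact ⟨p + 1, q, by omega, by omega, by omega⟩
    · exfalso
      obtain ⟨t, ht⟩ : ∃ t, a * b = 36 * t + 30 * p + 30 * q + 25 :=
        ⟨p * q, by rw [hp, hq]; ring⟩
      omega
  · rintro ⟨x, y, hx, hy, hk'⟩
    obtain ⟨x', rfl⟩ : ∃ x', x = x' + 1 := ⟨x - 1, by omega⟩
    refine ⟨6 * (x' + 1) - 1, 6 * y + 1, by omega, by omega, by omega, by omega,
      by omega, by omega, ?_⟩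
    obtain ⟨t, ht1, ht2⟩ : ∃ t, (6 * (x' + 1) - 1) * (6 * y + 1) =
          36 * t + 6 * x' + 30 * y + 5 ∧
        (6 * (x' + 1) - 1) * y + (x' + 1) = 6 * t + x' + 5 * y + 1 :=
      ⟨x' * y, by rw [show 6*(x'+1)-1 = 6*x'+5 by omega]; ring, by rw [show 6*(x'+1)-1 = 6*x'+5 by omega]; ring⟩
    omega
end

section
/- For a positive integer k, the number 6k-1 is composite if and only if k can be written as k = (6x+1)y - x for some positive integers x, y. -/
lemma stmt_6_aux (k x y : ℕ) (hk : 0 < k) (hx : 0 < x)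
    (h : 6 * k - 1 = (6 * x + 1) * (6 * y + 5)) :
    ∃ X Y : ℕ, 0 < X ∧ 0 < Y ∧ k = (6 * X + 1) * Y - X := by
  refine ⟨x, y + 1, hx, Nat.succ_pos _, ?_⟩
  obtain ⟨p, hp⟩ : ∃ p, x * y = p := ⟨_, rfl⟩
  have e1 : (6*x+1)*(6*y+5) = 36*p+30*x+6*y+5 := by rw [← hp]; ring
  have e2 : (6*x+1)*(y+1) = 6*p+6*x+y+1 := by rw [← hp]; ring
  rw [e1] at h
  rw [e2]
  omega

theorem stmt_6 (k : ℕ) (hk : 0 < k) :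
    (∃ a b : ℕ, 1 < a ∧ 1 < b ∧ 6 * k - 1 = a * b) ↔
    (∃ x y : ℕ, 0 < x ∧ 0 < y ∧ k = (6 * x + 1) * y - x) := by
  constructor
  · rintro ⟨a, b, ha, hb, h⟩
    have hab : (6 * k - 1) % 6 = 5 := by omega
    rw [h, Nat.mul_mod] at hab
    obtain ⟨ma, hma⟩ : ∃ m, a % 6 = m := ⟨_, rfl⟩
    obtain ⟨mb, hmb⟩ : ∃ m, b % 6 = m := ⟨_, rfl⟩
    rw [hma, hmb] at hab
    have h1 : ma < 6 := by omega
    have h2 : mb < 6 := by omega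
    interval_cases ma <;> interval_cases mb <;>
      first
      | omega
      | · -- a % 6 = 1, b % 6 = 5
          have ea : a = 6*(a/6)+1 := by omega
          have eb : b = 6*(b/6)+5 := by omega
          rw [ea, eb] at h
          exact stmt_6_aux k (a/6) (b/6) hk (by omega) h
      | · -- a % 6 = 5, b % 6 = 1
          have ea : a = 6*(a/6)+5 := by omega
          have eb : b = 6*(b/6)+1 := by omega
          rw [ea, eb, mul_comm (6*(a/6)+5)] at h
          exact stmt_6_aux k (b/6) (a/6) hk (by omega) h
  · rintro ⟨x, y, hx, hy, hxy⟩
    refine ⟨6*x+1, 6*y-1, by omega, by omega, ?_⟩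
    obtain ⟨q, hq⟩ : ∃ q, x * y = q := ⟨_, rfl⟩
    have e5 : (6*x+1)*y = 6*q+y := by rw [← hq]; ring
    have hqx : x ≤ q := by rw [← hq]; exact Nat.le_mul_of_pos_right x hy
    obtain ⟨t, ht⟩ : ∃ t, 6*y-1 = t := ⟨_, rfl⟩
    have key : (6*x+1)*t + (6*x+1) = (6*x+1)*(t+1) := by ring
    have ht1 : t + 1 = 6*y := by omega
    rw [ht1] at key
    have e4 : (6*x+1)*(6*y) = 36*q+6*y := by rw [← hq]; ring
    have e6 := key.trans e4
    rw [ht, hxy, e5]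
    obtain ⟨A, hA⟩ : ∃ A, (6*x+1)*t = A := ⟨_, rfl⟩
    rw [hA] at e6 ⊢
    omega
end

section
/- For a positive integer k, the number 6k+1 is composite if and only if k = (6x+1)y + x or k = (6x-1)y - x for some positive integers x, y. -/
theorem stmt_7 (k : ℕ) (hk : 0 < k) :
    (∃ a b : ℕ, 1 < a ∧ 1 < b ∧ 6 * k + 1 = a * b) ↔
    (∃ x y : ℕ, 0 < x ∧ 0 < y ∧
      (k = (6 * x + 1) * y + x ∨ k = (6 * x - 1) * y - x)) := by
  constructor
  · rintro ⟨a, b, ha, hb, hab⟩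
    obtain ⟨q1, r1, hr1, rfl⟩ : ∃ q r, r < 6 ∧ a = 6 * q + r :=
      ⟨a / 6, a % 6, Nat.mod_lt _ (by norm_num), by omega⟩
    obtain ⟨q2, r2, hr2, rfl⟩ : ∃ q r, r < 6 ∧ b = 6 * q + r :=
      ⟨b / 6, b % 6, Nat.mod_lt _ (by norm_num), by omega⟩
    obtain ⟨p, hp⟩ : ∃ p, q1 * q2 = p := ⟨_, rfl⟩
    have h : 6 * k + 1 = 36 * p + 6 * q1 * r2 + 6 * q2 * r1 + r1 * r2 := by
      rw [hab, ← hp]; ring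
    interval_cases r1 <;> interval_cases r2 <;>
      first
      | omega
      | (refine ⟨q1, q2, by omega, by omega, Or.inl ?_⟩
         have h2 : (6 * q1 + 1) * q2 = 6 * p + q2 := by rw [← hp]; ring
         omega)
      | (refine ⟨q1 + 1, q2 + 1, by omega, by omega, Or.inr ?_⟩
         have h2 : (6 * (q1 + 1) - 1) * (q2 + 1) = 6 * p + 6 * q1 + 5 * q2 + 5 := by
           have e : 6 * (q1 + 1) - 1 = 6 * q1 + 5 := by omega
           rw [e, ← hp]; ring
         omega)
  · rintro ⟨x, y, hx, hy, h | h⟩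
    · exact ⟨6 * x + 1, 6 * y + 1, by omega, by omega, by rw [h]; ring⟩
    · obtain ⟨u, rfl⟩ : ∃ u, x = u + 1 := ⟨x - 1, by omega⟩
      obtain ⟨v, rfl⟩ : ∃ v, y = v + 1 := ⟨y - 1, by omega⟩
      obtain ⟨p, hp⟩ : ∃ p, u * v = p := ⟨_, rfl⟩
      have e1 : (6 * (u + 1) - 1) * (v + 1) = 6 * p + 6 * u + 5 * v + 5 := by
        have e : 6 * (u + 1) - 1 = 6 * u + 5 := by omega
        rw [e, ← hp]; ring
      rw [e1] at h
      refine ⟨6 * u + 5, 6 * v + 5, by omega, by omega, ?_⟩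
      have e2 : (6 * u + 5) * (6 * v + 5) = 36 * p + 30 * u + 30 * v + 25 := by
        rw [← hp]; ring
      omega
end

section
/- For a positive integer k, the pair (6k-1, 6k+1) is a twin prime pair if and only if k cannot be written in any of the forms (6x-1)y + x, (6x-1)y - x, or (6x+1)y + x with x, y positive integers. -/
lemma exists_factor {n : ℕ} (h2 : 2 ≤ n) (hnp : ¬ n.Prime) :
    ∃ d e, 2 ≤ d ∧ 2 ≤ e ∧ n = d * e := by
  obtain ⟨m, hm, hm2, hmlt⟩ := Nat.exists_dvd_of_not_prime2 h2 hnp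
  obtain ⟨e, he⟩ := hm
  refine ⟨m, e, hm2, ?_, he⟩
  by_contra h
  interval_cases e <;> omega

set_option maxHeartbeats 1000000 in
theorem stmt_9 (k : ℕ) (hk : 0 < k) :
    (Nat.Prime (6 * k - 1) ∧ Nat.Prime (6 * k + 1)) ↔
    ¬ ∃ x y : ℕ, 0 < x ∧ 0 < y ∧
      (k = (6 * x - 1) * y + x ∨ k = (6 * x - 1) * y - x ∨
       k = (6 * x + 1) * y + x) := by
  constructor
  · rintro ⟨hp1, hp2⟩ ⟨x, y, hx, hy, h⟩
    obtain ⟨a, ha⟩ : ∃ a, x = a + 1 := ⟨x - 1, by omega⟩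
    have hQ : 6 * x - 1 = 6 * a + 5 := by omega
    rcases h with h | h | h
    · -- 6k-1 = (6a+5)(6y+1)
      rw [hQ] at h
      have key : 6 * k - 1 = (6 * a + 5) * (6 * y + 1) := by
        have h6 : 6 * k = (6 * a + 5) * (6 * y + 1) + 1 := by
          subst h; ring_nf; nlinarith
        omega
      rw [key] at hp1
      rcases Nat.prime_mul_iff.mp hp1 with ⟨_, h1⟩ | ⟨_, h1⟩ <;> omega
    · -- 6k+1 = (6a+5)(6y-1)
      rw [hQ] at h
      have hle : x ≤ (6 * a + 5) * y := by nlinarith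
      have h6 : k + (a + 1) = (6 * a + 5) * y := by omega
      obtain ⟨b, hb⟩ : ∃ b, y = b + 1 := ⟨y - 1, by omega⟩
      have key : 6 * k + 1 = (6 * a + 5) * (6 * b + 5) := by
        subst hb; nlinarith
      rw [key] at hp2
      rcases Nat.prime_mul_iff.mp hp2 with ⟨_, h1⟩ | ⟨_, h1⟩ <;> omega
    · -- 6k+1 = (6x+1)(6y+1)
      have key : 6 * k + 1 = (6 * x + 1) * (6 * y + 1) := by nlinarith
      rw [key] at hp2
      rcases Nat.prime_mul_iff.mp hp2 with ⟨_, h1⟩ | ⟨_, h1⟩ <;> omega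
  · intro hne
    constructor
    · by_contra hnp
      obtain ⟨d, e, hd2, he2, hde⟩ := exists_factor (by omega) hnp
      have hP : 6 * k - 1 = d * e := hde
      have hne2 : ¬ 2 ∣ d := fun h => by
        have : (2:ℕ) ∣ 6 * k - 1 := h.trans ⟨e, hde⟩
        omega
      have hne3 : ¬ 3 ∣ d := fun h => by
        have : (3:ℕ) ∣ 6 * k - 1 := h.trans ⟨e, hde⟩
        omega
      have hne2' : ¬ 2 ∣ e := fun h => by
        have : (2:ℕ) ∣ 6 * k - 1 := h.trans ⟨d, by rw [hde]; ring⟩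
        omega
      have hne3' : ¬ 3 ∣ e := fun h => by
        have : (3:ℕ) ∣ 6 * k - 1 := h.trans ⟨d, by rw [hde]; ring⟩
        omega
      have hd6 : d % 6 = 1 ∨ d % 6 = 5 := by omega
      have he6 : e % 6 = 1 ∨ e % 6 = 5 := by omega
      have hmod := Nat.mul_mod d e 6
      rw [← hde] at hmod
      have hn6 : (6 * k - 1) % 6 = 5 := by omega
      rcases hd6 with hd6 | hd6 <;> rcases he6 with he6 | he6
      · rw [hd6, he6] at hmod; omega
      · -- d = 6a+1 (a≥1), e = 6b+5 : x = b+1, y = a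
        obtain ⟨a, ha⟩ : ∃ a, d = 6 * a + 1 := ⟨d / 6, by omega⟩
        obtain ⟨b, hb⟩ : ∃ b, e = 6 * b + 5 := ⟨e / 6, by omega⟩
        refine hne ⟨b + 1, a, by omega, by omega, Or.inl ?_⟩
        have hQ : 6 * (b + 1) - 1 = 6 * b + 5 := by omega
        rw [hQ]
        have h6 : 6 * k = (6 * a + 1) * (6 * b + 5) + 1 := by
          rw [← ha, ← hb, ← hde]; omega
        nlinarith
      · -- d = 6a+5, e = 6b+1 (b≥1) : x = a+1, y = b
        obtain ⟨a, ha⟩ : ∃ a, d = 6 * a + 5 := ⟨d / 6, by omega⟩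
        obtain ⟨b, hb⟩ : ∃ b, e = 6 * b + 1 := ⟨e / 6, by omega⟩
        refine hne ⟨a + 1, b, by omega, by omega, Or.inl ?_⟩
        have hQ : 6 * (a + 1) - 1 = 6 * a + 5 := by omega
        rw [hQ]
        have h6 : 6 * k = (6 * a + 5) * (6 * b + 1) + 1 := by
          rw [← ha, ← hb, ← hde]; omega
        nlinarith
      · rw [hd6, he6] at hmod; omega
    · by_contra hnp
      obtain ⟨d, e, hd2, he2, hde⟩ := exists_factor (by omega) hnp
      have hne2 : ¬ 2 ∣ d := fun h => by
        have : (2:ℕ) ∣ 6 * k + 1 := h.trans ⟨e, hde⟩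
        omega
      have hne3 : ¬ 3 ∣ d := fun h => by
        have : (3:ℕ) ∣ 6 * k + 1 := h.trans ⟨e, hde⟩
        omega
      have hne2' : ¬ 2 ∣ e := fun h => by
        have : (2:ℕ) ∣ 6 * k + 1 := h.trans ⟨d, by rw [hde]; ring⟩
        omega
      have hne3' : ¬ 3 ∣ e := fun h => by
        have : (3:ℕ) ∣ 6 * k + 1 := h.trans ⟨d, by rw [hde]; ring⟩
        omega
      have hd6 : d % 6 = 1 ∨ d % 6 = 5 := by omega
      have he6 : e % 6 = 1 ∨ e % 6 = 5 := by omega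
      have hmod := Nat.mul_mod d e 6
      rw [← hde] at hmod
      rcases hd6 with hd6 | hd6 <;> rcases he6 with he6 | he6
      · -- d = 6a+1 (a≥1), e = 6b+1 (b≥1) : x = a, y = b, form 3
        obtain ⟨a, ha⟩ : ∃ a, d = 6 * a + 1 := ⟨d / 6, by omega⟩
        obtain ⟨b, hb⟩ : ∃ b, e = 6 * b + 1 := ⟨e / 6, by omega⟩
        refine hne ⟨a, b, by omega, by omega, Or.inr (Or.inr ?_)⟩
        have h6' : 6 * k + 1 = (6 * a + 1) * (6 * b + 1) := by
          rw [← ha, ← hb, hde]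
        rw [show (6*a+1)*b + a = 6*(a*b) + b + a from by ring]
        have hexp : 6 * k + 1 = 36*(a*b) + 6*a + 6*b + 1 := by rw [h6']; ring
        linarith
      · rw [hd6, he6] at hmod; omega
      · rw [hd6, he6] at hmod; omega
      · -- d = 6a+5, e = 6b+5 : x = a+1, y = b+1, form 2
        obtain ⟨a, ha⟩ : ∃ a, d = 6 * a + 5 := ⟨d / 6, by omega⟩
        obtain ⟨b, hb⟩ : ∃ b, e = 6 * b + 5 := ⟨e / 6, by omega⟩
        refine hne ⟨a + 1, b + 1, by omega, by omega, Or.inr (Or.inl ?_)⟩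
        have hQ : 6 * (a + 1) - 1 = 6 * a + 5 := by omega
        rw [hQ]
        have h6' : 6 * k + 1 = (6 * a + 5) * (6 * b + 5) := by
          rw [← ha, ← hb, hde]
        have h1 : k + (a + 1) = (6 * a + 5) * (b + 1) := by nlinarith
        have h2 : (6 * a + 5) * (b + 1) - (a + 1) = k := by omega
        omega
end

section
/- For a positive integer k, both 6k+1 and 6k+5 are prime (a cousin prime pair) only if k cannot be written in any of the forms (6x-1)y + x - 1, (6x-1)y - x, or (6x+1)y + x with x, y positive integers. -/
theorem stmt_15 (k : ℕ) (hk : 0 < k)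
    (h : Nat.Prime (6 * k + 1) ∧ Nat.Prime (6 * k + 5)) :
    ¬ ∃ x y : ℕ, 0 < x ∧ 0 < y ∧
      (k = (6 * x - 1) * y + x - 1 ∨ k = (6 * x - 1) * y - x ∨
       k = (6 * x + 1) * y + x) := by
  rintro ⟨x, y, hx, hy, hc⟩
  obtain ⟨a, rfl⟩ := Nat.exists_eq_add_of_lt hx
  obtain ⟨b, rfl⟩ := Nat.exists_eq_add_of_lt hy
  simp only [Nat.zero_add] at hc
  rcases hc with h1 | h2 | h3
  · -- 6k+5 = (6a+5)(6b+7)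
    have hkk : k = (6 * a + 5) * (b + 1) + a := by
      have : (6 * (a + 1) - 1) = 6 * a + 5 := by omega
      rw [this] at h1
      omega
    have : 6 * k + 5 = (6 * a + 5) * (6 * b + 7) := by
      subst hkk; ring
    rw [this] at h
    rcases (Nat.prime_mul_iff.mp h.2) with ⟨_, hb⟩ | ⟨_, ha⟩ <;> omega
  · -- 6k+1 = (6a+5)(6b+5)
    have ht : (6 * (a + 1) - 1) * (b + 1) = (6 * a + 5) * (b + 1) := by
      congr 1
    rw [ht] at h2
    set t := (6 * a + 5) * (b + 1) with htdef
    have htv : t = 6 * a * b + 6 * a + 5 * b + 5 := by rw [htdef]; ring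
    have hkk : k = 6 * a * b + 5 * a + 5 * b + 4 := by omega
    have : 6 * k + 1 = (6 * a + 5) * (6 * b + 5) := by
      subst hkk; ring
    rw [this] at h
    rcases (Nat.prime_mul_iff.mp h.1) with ⟨_, hb⟩ | ⟨_, ha⟩ <;> omega
  · -- 6k+1 = (6a+7)(6b+7)
    have hkk : k = (6 * (a + 1) + 1) * (b + 1) + (a + 1) := h3
    have : 6 * k + 1 = (6 * a + 7) * (6 * b + 7) := by
      subst hkk; ring
    rw [this] at h
    rcases (Nat.prime_mul_iff.mp h.1) with ⟨_, hb⟩ | ⟨_, ha⟩ <;> omega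
end
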